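/- Let k ≥ 4 be an integer. The finite binary word x = 1(0^{k-1}1)^{k-2} 0^{k-2} 1 0^{k-2} (10^{k-1})^{k-2} 1, which has length 2k² - 2k - 1, contains no factor that is a k-power and no factor that is a k-anti-power. Consequently, N_α(k,k) ≥ 2k² - 2k for every alphabet size α ≥ 2, where N_α(k,k) is the least N such that every word of length N over an alphabet of size α contains a k-power or a k-anti-power. -/
import Mathlib

/-- The `i`-th block of length `m` of a finite word `v`. -/
def listBlock {A : Type*} (v : List A) (m i : ℕ) : List A :=
  (v.drop (i * m)).take m

/-- `w` contains a factor that is a `k`-power `u^k` for some nonempty `u`. -/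
def HasKPowerFactor {A : Type*} (k : ℕ) (w : List A) : Prop :=
  ∃ u : List A, u ≠ [] ∧ (List.replicate k u).flatten <:+: w

/-- `v` is a `k`-anti-power: `v` consists of `k` pairwise distinct blocks of equal
positive length. -/
def IsKAntipower {A : Type*} (k : ℕ) (v : List A) : Prop :=
  ∃ m : ℕ, 1 ≤ m ∧ v.length = k * m ∧
    ∀ i < k, ∀ j < k, i ≠ j → listBlock v m i ≠ listBlock v m j

/-- `w` contains a factor that is a `k`-anti-power. -/
def HasKAntipowerFactor {A : Type*} (k : ℕ) (w : List A) : Prop :=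
  ∃ v : List A, v <:+: w ∧ IsKAntipower k v

/-- `N_α(k,k)` : the least `N` such that every word of length `N` over an alphabet of
size `α` contains a `k`-power or a `k`-anti-power. -/
noncomputable def Nalpha (α k : ℕ) : ℕ :=
  sInf {N | ∀ w : List (Fin α), w.length = N →
    HasKPowerFactor k w ∨ HasKAntipowerFactor k w}

/-- The binary word `x = 1 (0^(k-1) 1)^(k-2) 0^(k-2) 1 0^(k-2) (1 0^(k-1))^(k-2) 1`. -/
def lowerBoundWord (k : ℕ) : List (Fin 2) :=
  [1] ++ (List.replicate (k - 2) (List.replicate (k - 1) (0 : Fin 2) ++ [1])).flatten ++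
    List.replicate (k - 2) 0 ++ [1] ++ List.replicate (k - 2) 0 ++
    (List.replicate (k - 2) ((1 : Fin 2) :: List.replicate (k - 1) 0)).flatten ++ [1]

namespace S16
open List

theorem length_flatten_replicate (n : ℕ) (u : List α) :
    (List.replicate n u).flatten.length = n * u.length := by
  induction n with
  | zero => simp
  | succ n ih =>
    rw [List.replicate_succ, List.flatten_cons, List.length_append, ih, Nat.succ_mul]
    ring

theorem getElem?_flatten_replicate (n : ℕ) (u : List α) (p : ℕ) (h : p < n * u.length) :
    (List.replicate n u).flatten[p]? = u[p % u.length]? := by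
  induction n generalizing p with
  | zero => simp at h
  | succ n ih =>
    rw [List.replicate_succ, List.flatten_cons]
    rcases lt_or_ge p u.length with hp | hp
    · rw [List.getElem?_append_left hp, Nat.mod_eq_of_lt hp]
    · have hs : (n + 1) * u.length = n * u.length + u.length := Nat.succ_mul n u.length
      rw [List.getElem?_append_right hp, ih _ (by omega), Nat.mod_eq_sub_mod hp]

theorem infix_getElem? {α : Type*} {v x : List α} (h : v <:+: x) :
    ∃ s, s + v.length ≤ x.length ∧ ∀ n < v.length, x[s + n]? = v[n]? := by
  obtain ⟨pre, suf, rfl⟩ := h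
  refine ⟨pre.length, by simp, ?_⟩
  intro n hn
  rw [List.getElem?_append_left (by simp; omega), List.getElem?_append_right (by omega)]
  simp

/-- position `p` carries letter 1 in `lowerBoundWord k` -/
def OneAt (k p : ℕ) : Prop :=
  (k ∣ p ∧ p + 2 ≤ k * k - k) ∨ p = k * k - k - 1 ∨ (k * k - k ≤ p ∧ k ∣ (p + 2))

instance (k : ℕ) : DecidablePred (OneAt k) := fun _ => by unfold OneAt; infer_instance

noncomputable def oneFn (k p : ℕ) : Fin 2 := if OneAt k p then 1 else 0

theorem kk_fact (k : ℕ) (hk : 4 ≤ k) : (k-2)*k + 2*k = k*k := by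
  obtain ⟨j, rfl⟩ : ∃ j, k = j + 4 := ⟨k - 4, by omega⟩
  rw [show j + 4 - 2 = j + 2 from by omega]; ring

theorem lbw_length' (k : ℕ) (hk : 4 ≤ k) :
    (lowerBoundWord k).length + 1 + 2*k = 2*(k*k) := by
  have h1 : (List.replicate (k-1) (0:Fin 2) ++ [1]).length = k := by simp; omega
  have h2 : ((1:Fin 2) :: List.replicate (k-1) 0).length = k := by simp; omega
  have hK := kk_fact k hk
  simp only [lowerBoundWord, List.length_append, length_flatten_replicate, h1, h2,
    List.length_replicate, List.length_cons, List.length_singleton, List.length_nil]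
  omega

theorem lbw_length (k : ℕ) (hk : 4 ≤ k) :
    (lowerBoundWord k).length = 2*(k*k) - 2*k - 1 := by
  have := lbw_length' k hk; omega

theorem dvd_between {k a b : ℕ} (ha : k ∣ a) (hb : k ∣ b) (h : a < b) : a + k ≤ b := by
  have h1 : k ∣ b - a := Nat.dvd_sub hb ha
  have h2 : k ≤ b - a := Nat.le_of_dvd (by omega) h1
  omega

theorem dvd_kk_sub_k (k : ℕ) : k ∣ k*k - k := Nat.dvd_sub (Dvd.intro k rfl) dvd_rfl

theorem F1_getElem? (k q : ℕ) (hk : 4 ≤ k) (hq : q < (k-2) * k) :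
    (List.replicate (k-2) (List.replicate (k-1) (0:Fin 2) ++ [1])).flatten[q]?
      = some (if k ∣ (q+1) then 1 else 0) := by
  have hu : (List.replicate (k-1) (0:Fin 2) ++ [1]).length = k := by simp; omega
  rw [getElem?_flatten_replicate _ _ _ (by rw [hu]; exact hq), hu]
  have hdm : k * (q / k) + q % k = q := Nat.div_add_mod q k
  have hmod : q % k < k := Nat.mod_lt _ (by omega)
  rcases lt_or_ge (q % k) (k-1) with h | h
  · rw [List.getElem?_append_left (by simp; omega), List.getElem?_replicate]
    have hnd : ¬ k ∣ (q+1) := by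
      rintro ⟨c, hc⟩
      rcases Nat.lt_or_ge (q/k) c with h2 | h2
      · have h3 : k * (q/k + 1) ≤ k * c := Nat.mul_le_mul_left k h2
        rw [Nat.mul_add, Nat.mul_one] at h3; omega
      · have h3 : k * c ≤ k * (q/k) := Nat.mul_le_mul_left k h2
        omega
    rw [if_pos h, if_neg hnd]
  · have hqk : q % k = k - 1 := by omega
    rw [List.getElem?_append_right (by simp; omega)]
    have hd : k ∣ (q + 1) := ⟨q/k + 1, by rw [Nat.mul_add, Nat.mul_one]; omega⟩
    rw [if_pos hd]
    simp [hqk, show k - 1 - (List.replicate (k-1) (0:Fin 2)).length = 0 from by simp]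

theorem F2_getElem? (k q : ℕ) (hk : 4 ≤ k) (hq : q < (k-2) * k) :
    (List.replicate (k-2) ((1:Fin 2) :: List.replicate (k-1) 0)).flatten[q]?
      = some (if k ∣ q then 1 else 0) := by
  have hu : ((1:Fin 2) :: List.replicate (k-1) 0).length = k := by simp; omega
  rw [getElem?_flatten_replicate _ _ _ (by rw [hu]; exact hq), hu]
  have hdm : k * (q / k) + q % k = q := Nat.div_add_mod q k
  have hmod : q % k < k := Nat.mod_lt _ (by omega)
  rcases Nat.eq_zero_or_pos (q % k) with h | h
  · have hd : k ∣ q := ⟨q/k, by omega⟩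
    rw [if_pos hd, h, List.getElem?_cons_zero]
  · have hnd : ¬ k ∣ q := by
      rintro ⟨c, hc⟩
      rcases Nat.lt_or_ge (q/k) c with h2 | h2
      · have : k * (q/k + 1) ≤ k * c := Nat.mul_le_mul_left k h2
        rw [Nat.mul_add, Nat.mul_one] at this; omega
      · have : k * c ≤ k * (q/k) := Nat.mul_le_mul_left k h2
        omega
    rw [if_neg hnd]
    rcases Nat.exists_eq_add_of_lt h with ⟨r, hr⟩
    rw [show q % k = r + 1 from by omega]
    simp only [List.getElem?_cons_succ, List.getElem?_replicate]
    rw [if_pos (by omega)]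


open List

theorem lbw_getElem? (k : ℕ) (hk : 4 ≤ k) (p : ℕ) (hp : p < 2*(k*k) - 2*k - 1) :
    (lowerBoundWord k)[p]? = some (oneFn k p) := by
  have hK := kk_fact k hk
  have hdA : k ∣ k*k - k := dvd_kk_sub_k k
  have hP : 2*k ≤ (k-2)*k := Nat.mul_le_mul_right k (by omega)
  have lF1 : (List.replicate (k - 2) (List.replicate (k - 1) (0 : Fin 2) ++ [1])).flatten.length = (k-2)*k := by
    rw [length_flatten_replicate]
    simp only [List.length_append, List.length_replicate, List.length_cons, List.length_nil]
    congr 1; omega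
  have lF2 : (List.replicate (k - 2) ((1 : Fin 2) :: List.replicate (k - 1) 0)).flatten.length = (k-2)*k := by
    rw [length_flatten_replicate]
    simp only [List.length_replicate, List.length_cons]
    congr 1; omega
  rw [lowerBoundWord]
  simp only [List.getElem?_append, List.length_append, lF1, lF2, List.length_replicate,
    List.length_cons, List.length_nil]
  split_ifs with c1 c2 c3 c4 c5 c6
  · -- p = 0
    have hp0 : p = 0 := by omega
    subst hp0
    rw [List.getElem?_cons_zero]
    congr 1
    rw [oneFn, if_pos (show OneAt k 0 from Or.inl ⟨dvd_zero k, by omega⟩)]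
  · -- F1 region
    simp only [not_lt] at *
    rw [F1_getElem? k (p - (0+1)) hk (by omega),
      show p - (0+1) + 1 = p from by omega]
    congr 1
    by_cases hd : k ∣ p
    · rw [if_pos hd, oneFn, if_pos (show OneAt k p from Or.inl ⟨hd, by omega⟩)]
    · rw [if_neg hd, oneFn, if_neg (show ¬ OneAt k p from ?_)]
      rintro (⟨h1, h2⟩ | h1 | ⟨h1, h2⟩)
      · exact hd h1
      · omega
      · omega
  · -- Z1 region
    simp only [not_lt] at *
    rw [List.getElem?_replicate_of_lt (by omega)]
    congr 1
    rw [oneFn, if_neg (show ¬ OneAt k p from ?_)]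
    rintro (⟨h1, h2⟩ | h1 | ⟨h1, h2⟩)
    · have := dvd_between h1 hdA (show p < k*k - k from by omega); omega
    · omega
    · omega
  · -- middle 1
    simp only [not_lt] at *
    rw [show p - (0 + 1 + (k - 2) * k + (k - 2)) = 0 from by omega, List.getElem?_cons_zero]
    congr 1
    rw [oneFn, if_pos (show OneAt k p from Or.inr (Or.inl (by omega)))]
  · -- Z2 region
    simp only [not_lt] at *
    rw [List.getElem?_replicate_of_lt (by omega)]
    congr 1
    rw [oneFn, if_neg (show ¬ OneAt k p from ?_)]
    rintro (⟨h1, h2⟩ | h1 | ⟨h1, h2⟩)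
    · omega
    · omega
    · have := dvd_between hdA h2 (show k*k - k < p + 2 from by omega); omega
  · -- F2 region
    simp only [not_lt] at *
    have h3 : k ∣ k*k := Dvd.intro k rfl
    rw [F2_getElem? k (p - (0 + 1 + (k - 2) * k + (k - 2) + (0 + 1) + (k - 2))) hk (by omega)]
    congr 1
    by_cases hd : k ∣ (p + 2)
    · have hq : k ∣ (p - (0 + 1 + (k - 2) * k + (k - 2) + (0 + 1) + (k - 2))) := by
        rw [show p - (0 + 1 + (k - 2) * k + (k - 2) + (0 + 1) + (k - 2)) = p + 2 - k*k from by omega]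
        exact Nat.dvd_sub hd h3
      rw [if_pos hq, oneFn, if_pos (show OneAt k p from Or.inr (Or.inr ⟨by omega, hd⟩))]
    · rw [if_neg ?_, oneFn, if_neg (show ¬ OneAt k p from ?_)]
      · rintro (⟨h1, h2⟩ | h1 | ⟨h1, h2⟩)
        · omega
        · omega
        · exact hd h2
      · intro hq
        apply hd
        have h4 := Nat.dvd_add h3 hq
        rw [show p + 2 = k*k + (p - (0 + 1 + (k - 2) * k + (k - 2) + (0 + 1) + (k - 2))) from by omega]
        exact h4
  · -- final 1
    simp only [not_lt] at *
    rw [show p - (0 + 1 + (k - 2) * k + (k - 2) + (0 + 1) + (k - 2) + (k - 2) * k) = 0 from by omega,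
      List.getElem?_cons_zero]
    congr 1
    rw [oneFn, if_pos (show OneAt k p from Or.inr (Or.inr ⟨by omega, by
      rw [show p + 2 = 2*(k*k - k) from by omega]
      exact (dvd_kk_sub_k k).mul_left 2⟩))]


open List

theorem oneAt_of_oneFn {k p : ℕ} (h : oneFn k p = 1) : OneAt k p := by
  by_contra hno
  rw [oneFn, if_neg hno] at h
  exact absurd h (by decide)

theorem oneFn_of_oneAt {k p : ℕ} (h : OneAt k p) : oneFn k p = 1 := by
  rw [oneFn, if_pos h]

theorem km1k (k : ℕ) (hk : 4 ≤ k) : (k-1)*k + k = k*k := by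
  obtain ⟨j, rfl⟩ : ∃ j, k = j + 4 := ⟨k - 4, by omega⟩
  rw [show j + 4 - 1 = j + 3 from by omega]; ring

theorem exists_one_in_window (k s : ℕ) (hk : 4 ≤ k) (h : s + k ≤ 2*(k*k) - 2*k - 1) :
    ∃ p, s ≤ p ∧ p < s + k ∧ OneAt k p := by
  have hK := kk_fact k hk
  have hP : 2*k ≤ (k-2)*k := Nat.mul_le_mul_right k (by omega)
  have hdA : k ∣ k*k - k := dvd_kk_sub_k k
  rcases Nat.lt_or_ge (k*k - k) (s + k) with c1 | c1
  · rcases Nat.lt_or_ge (k*k - k - 1) s with c2 | c2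
    · -- s ≥ A : take next ≡ -2 (mod k)
      have hdm := Nat.div_add_mod (s + k + 1) k
      have hmod : (s + k + 1) % k < k := Nat.mod_lt _ (by omega)
      refine ⟨k * ((s + k + 1)/k) - 2, by omega, by omega, Or.inr (Or.inr ⟨by omega, ⟨(s+k+1)/k, by omega⟩⟩)⟩
    · -- middle one
      exact ⟨k*k - k - 1, c2, by omega, Or.inr (Or.inl rfl)⟩
  · -- left region : next multiple of k
    have hdm := Nat.div_add_mod (s + k - 1) k
    have hmod : (s + k - 1) % k < k := Nat.mod_lt _ (by omega)
    refine ⟨k * ((s + k - 1)/k), by omega, by omega, Or.inl ⟨⟨_, rfl⟩, ?_⟩⟩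
    have hdp : k ∣ k * ((s + k - 1)/k) := ⟨_, rfl⟩
    rcases Nat.lt_or_ge (k * ((s + k - 1)/k)) (k*k - k) with c3 | c3
    · have := dvd_between hdp hdA c3; omega
    · omega

theorem no_k_ap (k q g : ℕ) (hk : 4 ≤ k) (hg : 1 ≤ g)
    (hall : ∀ r < k, OneAt k (q + r*g))
    (hlt : ∀ r < k, q + r*g < 2*(k*k) - 2*k - 1) : False := by
  have hK := kk_fact k hk
  have hP : 2*k ≤ (k-2)*k := Nat.mul_le_mul_right k (by omega)
  have hdA : k ∣ k*k - k := dvd_kk_sub_k k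
  have hA1 : (k-1)*k + k = k*k := km1k k hk
  have h0 : OneAt k q := by have := hall 0 (by omega); rwa [Nat.zero_mul, Nat.add_zero] at this
  by_cases hd : k ∣ g
  · have hgk : k ≤ g := Nat.le_of_dvd (by omega) hd
    have hge : (k-1)*k ≤ (k-1)*g := Nat.mul_le_mul_left _ hgk
    rcases h0 with ⟨hq1, hq2⟩ | hq | ⟨hq1, hq2⟩
    · -- part1 start : look at last element
      have he := hall (k-1) (by omega)
      have hdvd : k ∣ q + (k-1)*g := Nat.dvd_add hq1 (hd.mul_left (k-1))
      rcases he with ⟨he1, he2⟩ | he | ⟨he1, he2⟩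
      · omega
      · -- q + (k-1)*g = A-1 but k ∣ it and k ∣ A
        have := dvd_between hdvd hdA (show q + (k-1)*g < k*k - k from by omega)
        omega
      · -- k ∣ e and k ∣ e+2
        have h2 : k ∣ 2 := by
          have := Nat.dvd_sub he2 hdvd
          rwa [show q + (k-1)*g + 2 - (q + (k-1)*g) = 2 from by omega] at this
        have := Nat.le_of_dvd (by omega) h2; omega
    · -- q = A-1
      have he := hall 1 (by omega)
      rw [Nat.one_mul] at he
      rcases he with ⟨he1, he2⟩ | he | ⟨he1, he2⟩
      · omega
      · omega
      · have h2 : k ∣ 1 := by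
          have hAg : k ∣ (k*k - k) + g := Nat.dvd_add hdA hd
          have h5 := Nat.dvd_sub he2 hAg
          rwa [show q + g + 2 - ((k*k - k) + g) = 1 from by omega] at h5
        have := Nat.le_of_dvd (by omega) h2
        omega
    · -- part3 start : too long
      have := hlt (k-1) (by omega)
      omega
  · -- k does not divide g : parts strictly increase
    have st3 : ∀ p, k*k - k ≤ p → OneAt k p → OneAt k (p + g) → False := by
      intro p hp h1 h2
      have hp2 : k ∣ p + 2 := by
        rcases h1 with ⟨h1a, h1b⟩ | h1a | ⟨h1a, h1b⟩
        · omega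
        · omega
        · exact h1b
      have hpg2 : k ∣ p + g + 2 := by
        rcases h2 with ⟨h2a, h2b⟩ | h2a | ⟨h2a, h2b⟩
        · omega
        · omega
        · exact h2b
      apply hd
      have := Nat.dvd_sub hpg2 hp2
      rwa [show p + g + 2 - (p + 2) = g from by omega] at this
    have st2 : ∀ p, p = k*k - k - 1 → OneAt k (p + g) → k*k - k ≤ p + g := by
      intro p hp h2
      rcases h2 with ⟨h2a, h2b⟩ | h2a | ⟨h2a, h2b⟩
      · omega
      · omega
      · exact h2a
    have st1 : ∀ p, OneAt k p → p + 2 ≤ k*k - k → OneAt k (p + g) →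
        (p + g = k*k - k - 1 ∨ k*k - k ≤ p + g) := by
      intro p h1 hple h2
      have hdp : k ∣ p := by
        rcases h1 with ⟨h1a, h1b⟩ | h1a | ⟨h1a, h1b⟩
        · exact h1a
        · omega
        · omega
      rcases h2 with ⟨h2a, h2b⟩ | h2a | ⟨h2a, h2b⟩
      · exfalso; apply hd
        have := Nat.dvd_sub h2a hdp
        rwa [show p + g - p = g from by omega] at this
      · exact Or.inl h2a
      · exact Or.inr h2a
    have e1 := hall 1 (by omega); rw [Nat.one_mul] at e1
    have e2 := hall 2 (by omega)
    have e3 := hall 3 (by omega)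
    have r2 : q + 2*g = (q + g) + g := by ring
    have r3 : q + 3*g = (q + 2*g) + g := by ring
    rcases h0 with ⟨hq1, hq2⟩ | hq | ⟨hq1, hq2⟩
    · rcases st1 q (Or.inl ⟨hq1, hq2⟩) hq2 e1 with hmid | hbig
      · have h3 := st2 (q+g) hmid (by rw [← r2]; exact e2)
        exact st3 (q + 2*g) (by omega) e2 (by rw [← r3]; exact e3)
      · exact st3 (q + g) hbig e1 (by rw [← r2]; exact e2)
    · have h3 := st2 q hq e1
      exact st3 (q + g) h3 e1 (by rw [← r2]; exact e2)
    · exact st3 q hq1 (Or.inr (Or.inr ⟨hq1, hq2⟩)) e1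

theorem no_kpower (k : ℕ) (hk : 4 ≤ k) : ¬ HasKPowerFactor k (lowerBoundWord k) := by
  rintro ⟨u, hne, hinf⟩
  obtain ⟨s, hslen, hsget⟩ := infix_getElem? hinf
  have hL := lbw_length k hk
  have hK := kk_fact k hk
  have hP : 2*k ≤ (k-2)*k := Nat.mul_le_mul_right k (by omega)
  have hulen : 0 < u.length := List.length_pos_iff.mpr hne
  have hflen : (List.replicate k u).flatten.length = k * u.length :=
    length_flatten_replicate k u
  rw [hflen, hL] at hslen
  have hkg : k ≤ k * u.length := by
    calc k = k * 1 := by ring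
    _ ≤ k * u.length := Nat.mul_le_mul_left k hulen
  by_cases h1 : ∃ t, t < u.length ∧ u[t]? = some 1
  · obtain ⟨t, ht, hu1⟩ := h1
    apply no_k_ap k (s+t) u.length hk hulen ?_ ?_
    · intro r hr
      have hmul : (r+1) * u.length ≤ k * u.length := Nat.mul_le_mul_right _ (by omega)
      rw [Nat.add_mul, Nat.one_mul] at hmul
      have hlt2 : t + r * u.length < k * u.length := by omega
      have e1 := hsget (t + r*u.length) (by rw [hflen]; exact hlt2)
      rw [getElem?_flatten_replicate _ _ _ hlt2, Nat.add_mul_mod_self_right,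
        Nat.mod_eq_of_lt ht, hu1] at e1
      have e2 := lbw_getElem? k hk (s + (t + r*u.length)) (by omega)
      rw [e1] at e2
      have : oneFn k (s + (t + r * u.length)) = 1 := Option.some.inj e2.symm
      have := oneAt_of_oneFn this
      rwa [show s + (t + r*u.length) = s + t + r*u.length from by omega] at this
    · intro r hr
      have hmul : (r+1) * u.length ≤ k * u.length := Nat.mul_le_mul_right _ (by omega)
      rw [Nat.add_mul, Nat.one_mul] at hmul
      omega
  · push_neg at h1
    obtain ⟨p, hp1, hp2, hp3⟩ := exists_one_in_window k s hk (by omega)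
    have hlt2 : p - s < k * u.length := by omega
    have e1 := hsget (p - s) (by rw [hflen]; exact hlt2)
    rw [getElem?_flatten_replicate _ _ _ hlt2] at e1
    have hmlt : (p - s) % u.length < u.length := Nat.mod_lt _ hulen
    have e2 := lbw_getElem? k hk (s + (p - s)) (by omega)
    rw [show s + (p - s) = p from by omega] at e2
    rw [show s + (p - s) = p from by omega] at e1
    rw [e2, List.getElem?_eq_getElem hmlt] at e1
    have hne1 := h1 _ hmlt
    rw [List.getElem?_eq_getElem hmlt] at hne1
    have : oneFn k p = u[(p - s) % u.length]'hmlt := by injection e1 with h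
    rw [oneFn_of_oneAt hp3] at this
    exact hne1 (by rw [← this])


open List

theorem oneFn_congr {k p q : ℕ} (h : OneAt k p ↔ OneAt k q) : oneFn k p = oneFn k q := by
  rw [oneFn, oneFn]; exact if_congr h rfl rfl

theorem run_left (k p D : ℕ) (hk : 4 ≤ k) (hD : k ∣ D) (h : p + D + 2 ≤ k*k - k) :
    (OneAt k p ↔ OneAt k (p + D)) := by
  have hK := kk_fact k hk
  have hP : 2*k ≤ (k-2)*k := Nat.mul_le_mul_right k (by omega)
  constructor
  · rintro (⟨h1, h2⟩ | h1 | ⟨h1, h2⟩)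
    · exact Or.inl ⟨Nat.dvd_add h1 hD, by omega⟩
    · exfalso; omega
    · exfalso; omega
  · rintro (⟨h1, h2⟩ | h1 | ⟨h1, h2⟩)
    · have h3 : k ∣ p := by
        have h4 := Nat.dvd_sub h1 hD
        rwa [show p + D - D = p from by omega] at h4
      exact Or.inl ⟨h3, by omega⟩
    · exfalso; omega
    · exfalso; omega

theorem run_right (k p D : ℕ) (hk : 4 ≤ k) (hD : k ∣ D) (hp : k*k - k ≤ p) :
    (OneAt k p ↔ OneAt k (p + D)) := by
  have hK := kk_fact k hk
  have hP : 2*k ≤ (k-2)*k := Nat.mul_le_mul_right k (by omega)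
  constructor
  · rintro (⟨h1, h2⟩ | h1 | ⟨h1, h2⟩)
    · exfalso; omega
    · exfalso; omega
    · refine Or.inr (Or.inr ⟨by omega, ?_⟩)
      have h3 := Nat.dvd_add h2 hD
      rwa [show p + 2 + D = p + D + 2 from by omega] at h3
  · rintro (⟨h1, h2⟩ | h1 | ⟨h1, h2⟩)
    · exfalso; omega
    · exfalso; omega
    · refine Or.inr (Or.inr ⟨hp, ?_⟩)
      have h3 := Nat.dvd_sub h2 hD
      rwa [show p + D + 2 - D = p + 2 from by omega] at h3

theorem run_mid (k p D : ℕ) (hk : 4 ≤ k) (hD : k ∣ D + 2)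
    (h1 : k*k - k ≤ p + D) (h2 : p + 2 ≤ k*k - k) :
    (OneAt k p ↔ OneAt k (p + D)) := by
  have hK := kk_fact k hk
  have hP : 2*k ≤ (k-2)*k := Nat.mul_le_mul_right k (by omega)
  constructor
  · rintro (⟨ha, hb⟩ | ha | ⟨ha, hb⟩)
    · refine Or.inr (Or.inr ⟨h1, ?_⟩)
      have h3 := Nat.dvd_add ha hD
      rwa [show p + (D+2) = p + D + 2 from by omega] at h3
    · exfalso; omega
    · exfalso; omega
  · rintro (⟨ha, hb⟩ | ha | ⟨ha, hb⟩)
    · exfalso; omega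
    · exfalso; omega
    · refine Or.inl ⟨?_, h2⟩
      have h3 := Nat.dvd_sub hb hD
      rwa [show p + D + 2 - (D + 2) = p from by omega] at h3

theorem run_c (k p : ℕ) (hk : 4 ≤ k) (h1 : k*k - 3*k + 2 ≤ p) (h2 : p + 3 ≤ k*k) :
    (OneAt k p ↔ OneAt k (p + (k-1))) := by
  have hK := kk_fact k hk
  have hP : 2*k ≤ (k-2)*k := Nat.mul_le_mul_right k (by omega)
  have hdA : k ∣ k*k - k := dvd_kk_sub_k k
  have hdAk : k ∣ k*k - 2*k := Nat.dvd_sub (Dvd.intro k rfl) ⟨2, by ring⟩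
  have hdkk : k ∣ k*k := Dvd.intro k rfl
  constructor
  · rintro (⟨ha, hb⟩ | ha | ⟨ha, hb⟩)
    · have hpe : p = k*k - 2*k := by
        rcases Nat.lt_trichotomy p (k*k - 2*k) with h | h | h
        · have := dvd_between ha hdAk h; omega
        · exact h
        · have := dvd_between hdAk ha h; omega
      exact Or.inr (Or.inl (by omega))
    · refine Or.inr (Or.inr ⟨by omega, ?_⟩)
      rw [show p + (k-1) + 2 = k*k from by omega]
      exact hdkk
    · exfalso
      have := dvd_between hdA hb (show k*k - k < p + 2 from by omega)
      omega
  · rintro (⟨ha, hb⟩ | ha | ⟨ha, hb⟩)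
    · exfalso
      have := dvd_between hdAk ha (show k*k - 2*k < p + (k-1) from by omega)
      omega
    · refine Or.inl ⟨?_, by omega⟩
      rw [show p = k*k - 2*k from by omega]; exact hdAk
    · have he1 := dvd_between hdA hb (show k*k - k < p + (k-1) + 2 from by omega)
      rcases Nat.lt_trichotomy (p + (k-1) + 2) (k*k) with h | h | h
      · exfalso; omega
      · exact Or.inr (Or.inl (by omega))
      · exfalso; have := dvd_between hdkk hb h; omega

theorem one_gap (k p q : ℕ) (hk : 4 ≤ k) (h1 : OneAt k p) (h2 : OneAt k q)
    (hlt : p < q) : p + (k-1) ≤ q := by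
  have hK := kk_fact k hk
  have hP : 2*k ≤ (k-2)*k := Nat.mul_le_mul_right k (by omega)
  have hdA : k ∣ k*k - k := dvd_kk_sub_k k
  rcases h1 with ⟨ha, hb⟩ | ha | ⟨ha, hb⟩ <;> rcases h2 with ⟨hc, hd⟩ | hc | ⟨hc, hd⟩
  · have := dvd_between ha hc hlt; omega
  · have := dvd_between ha hdA (show p < k*k - k from by omega); omega
  · have := dvd_between ha hdA (show p < k*k - k from by omega); omega
  · omega
  · omega
  · have := dvd_between hdA hd (show k*k - k < q + 2 from by omega); omega
  · omega
  · omega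
  · have := dvd_between hb hd (show p + 2 < q + 2 from by omega); omega


open List

theorem no_kanti (k : ℕ) (hk : 4 ≤ k) : ¬ HasKAntipowerFactor k (lowerBoundWord k) := by
  rintro ⟨v, hinf, m, hm, hlen, hdist⟩
  obtain ⟨s, hslen, hsget⟩ := infix_getElem? hinf
  have hL := lbw_length k hk
  have hK := kk_fact k hk
  have hP : 2*k ≤ (k-2)*k := Nat.mul_le_mul_right k (by omega)
  have hA1 : (k-1)*k + k = k*k := km1k k hk
  rw [hlen, hL] at hslen
  have hvget : ∀ n < k*m, v[n]? = (lowerBoundWord k)[s + n]? := by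
    intro n hn; exact (hsget n (by rw [hlen]; exact hn)).symm
  have hblock : ∀ i t, i < k → t < m →
      (listBlock v m i)[t]? = some (oneFn k (s + (i*m + t))) := by
    intro i t hi ht
    have h5 : (i+1)*m ≤ k*m := Nat.mul_le_mul_right m (by omega)
    rw [Nat.add_mul, Nat.one_mul] at h5
    have hidx : i*m + t < k*m := by omega
    rw [listBlock, List.getElem?_take_of_lt ht, List.getElem?_drop,
      hvget (i*m+t) hidx, lbw_getElem? k hk _ (by omega)]
  have hEq : ∀ i j, i < k → j < k →
      (∀ t, t < m → oneFn k (s + (i*m + t)) = oneFn k (s + (j*m + t))) →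
      listBlock v m i = listBlock v m j := by
    intro i j hi hj hone
    apply List.ext_getElem?
    intro t
    rcases Nat.lt_or_ge t m with ht | ht
    · rw [hblock i t hi ht, hblock j t hj ht, hone t ht]
    · simp only [listBlock]
      rw [List.getElem?_eq_none (le_trans (List.length_take_le _ _) ht),
        List.getElem?_eq_none (le_trans (List.length_take_le _ _) ht)]
  have hmub : m ≤ 2*k - 3 := by
    by_contra h
    have h5 : k*(2*k-2) ≤ k*m := Nat.mul_le_mul_left k (by omega)
    have h6 : k*(2*k-2) + 2*k = 2*(k*k) := by
      obtain ⟨j, rfl⟩ : ∃ j, k = j + 4 := ⟨k - 4, by omega⟩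
      rw [show 2*(j+4)-2 = 2*j+6 from by omega]; ring
    omega
  rcases Nat.lt_or_ge m (k-1) with hsmall | h1
  · -- CASE m ≤ k-2 : pigeonhole on single-one offsets
    classical
    have hcard : Fintype.card (Fin (m+1)) < Fintype.card (Fin k) := by
      simp only [Fintype.card_fin]; omega
    set f : Fin k → Fin (m+1) := fun i =>
      if h : ∃ t, t < m ∧ OneAt k (s + (i.val*m + t)) then
        ⟨Nat.find h, by have := (Nat.find_spec h).1; omega⟩
      else ⟨m, by omega⟩ with hf
    obtain ⟨i, j, hne, hfe⟩ := Fintype.exists_ne_map_eq_of_card_lt f hcard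
    have hkey : ∀ (i : Fin k) (t : ℕ), t < m →
        (OneAt k (s + (i.val*m + t)) ↔ ((f i : Fin (m+1)) : ℕ) = t) := by
      intro i t ht
      constructor
      · intro hone
        have hex : ∃ t', t' < m ∧ OneAt k (s + (i.val*m + t')) := ⟨t, ht, hone⟩
        rw [hf]
        simp only [dif_pos hex]
        have hle : Nat.find hex ≤ t := Nat.find_le ⟨ht, hone⟩
        rcases Nat.lt_or_ge (Nat.find hex) t with hlt2 | hge2
        · exfalso
          have hspec := Nat.find_spec hex
          have hgap := one_gap k (s + (i.val*m + Nat.find hex)) (s + (i.val*m + t)) hk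
            hspec.2 hone (by omega)
          omega
        · omega
      · intro hft
        rw [hf] at hft
        by_cases hex : ∃ t', t' < m ∧ OneAt k (s + (i.val*m + t'))
        · simp only [dif_pos hex] at hft
          have hspec := Nat.find_spec hex
          rw [← hft]
          exact hspec.2
        · simp only [dif_neg hex] at hft
          omega
    have heqb : listBlock v m i.val = listBlock v m j.val := by
      apply hEq _ _ i.isLt j.isLt
      intro t ht
      apply oneFn_congr
      rw [hkey i t ht, hkey j t ht, hfe]
    exact hdist i.val i.isLt j.val j.isLt (fun hh => hne (Fin.ext hh)) heqb
  · rcases Nat.lt_or_ge m k with hmk | hbig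
    · -- CASE m = k-1
      have hm1 : m = k - 1 := by omega
      have hkm : k*m + k = k*k := by rw [hm1, Nat.mul_comm]; exact hA1
      have hm0 : 0 < m := by omega
      have hdm := Nat.div_add_mod (k*k - k - 1 - s) m
      have hrm : (k*k - k - 1 - s) % m < m := Nat.mod_lt _ hm0
      set Q := (k*k - k - 1 - s)/m with hQdef
      set i := min Q (k-2) with hidef
      have hcm : m * Q = Q * m := Nat.mul_comm _ _
      have h7 : (k-2)*m + 3*k = k*k + 2 := by
        rw [hm1]
        obtain ⟨j, rfl⟩ : ∃ j, k = j + 4 := ⟨k - 4, by omega⟩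
        rw [show j+4-2 = j+2 from by omega, show j+4-1 = j+3 from by omega]
        ring
      have hsucc : k*m = (k-1)*m + m := by
        have h10 : (k-1+1)*m = (k-1)*m + m := by rw [Nat.add_mul, Nat.one_mul]
        rw [show k-1+1 = k from by omega] at h10; omega
      have hwin1 : k*k - 3*k + 2 ≤ s + i*m := by
        rcases le_or_gt Q (k-2) with hq | hq
        · have hieq : i = Q := by omega
          rw [hieq]; omega
        · have hieq : i = k-2 := by omega
          rw [hieq]; omega
      have hwin2 : s + i*m + m + 2 ≤ k*k := by
        rcases le_or_gt Q (k-2) with hq | hq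
        · have hieq : i = Q := by omega
          rw [hieq]; omega
        · have hieq : i = k-2 := by omega
          have h8 : (k-1)*m ≤ Q*m := Nat.mul_le_mul_right m (by omega)
          rw [hieq]; omega
      have hpt : ∀ t, t < m → oneFn k (s + (i*m + t)) = oneFn k (s + ((i+1)*m + t)) := by
        intro t ht
        have hiff := run_c k (s + (i*m + t)) hk (by omega) (by omega)
        have hcg := oneFn_congr hiff
        have h15 : (i+1)*m = i*m + m := by rw [Nat.add_mul, Nat.one_mul]
        rwa [show s + (i*m + t) + (k-1) = s + ((i+1)*m + t) from by omega] at hcg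
      exact hdist i (by omega) (i+1) (by omega) (by omega)
        (hEq i (i+1) (by omega) (by omega) hpt)
    · -- CASE k ≤ m
      have hm0 : 0 < m := by omega
      have hsucc : k*m = (k-1)*m + m := by
        have h10 : (k-1+1)*m = (k-1)*m + m := by rw [Nat.add_mul, Nat.one_mul]
        rw [show k-1+1 = k from by omega] at h10; omega
      have h8 : (k-1)*k ≤ (k-1)*m := Nat.mul_le_mul_left _ hbig
      have hs_ub : s + m + 1 ≤ k*k - k := by omega
      rcases Nat.lt_or_ge (Nat.gcd m k) 3 with hg | hg
      · -- gcd ≤ 2 : type B (middle run)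
        have hg1 : 0 < Nat.gcd m k := Nat.gcd_pos_of_pos_right m (by omega)
        obtain ⟨d, hd1, hdk, hdvd⟩ : ∃ d, 1 ≤ d ∧ d ≤ k-1 ∧ k ∣ d*m + 2 := by
          obtain ⟨c, hc2⟩ : Nat.gcd m k ∣ 2 := by
            have h2 : Nat.gcd m k = 1 ∨ Nat.gcd m k = 2 := by omega
            rcases h2 with h2 | h2 <;> simp [h2]
          have hbez := Nat.gcd_eq_gcd_ab m k
          set a : ℤ := (c:ℤ) * Nat.gcdA m k with ha
          set b : ℤ := (c:ℤ) * Nat.gcdB m k with hb2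
          have h2eq : (2:ℤ) = (m:ℤ) * a + (k:ℤ) * b := by
            have hcast : (2:ℤ) = (Nat.gcd m k : ℤ) * (c:ℤ) := by exact_mod_cast hc2
            rw [hcast, hbez, ha, hb2]; ring
          set d0 : ℤ := (-a) % (k:ℤ) with hd0def
          have hkne : (k:ℤ) ≠ 0 := by exact_mod_cast (by omega : k ≠ 0)
          have hd0nn : 0 ≤ d0 := Int.emod_nonneg _ hkne
          have hd0lt : d0 < (k:ℤ) := Int.emod_lt_of_pos _ (by exact_mod_cast (by omega : 0 < k))
          have hdvdz : (k:ℤ) ∣ d0 * (m:ℤ) + 2 := by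
            refine ⟨(-((-a)/(k:ℤ))) * (m:ℤ) + b, ?_⟩
            rw [hd0def, Int.emod_def]
            linear_combination h2eq
          have htn : ((d0.toNat : ℕ) : ℤ) = d0 := Int.toNat_of_nonneg hd0nn
          have hdvdn : k ∣ d0.toNat * m + 2 := by
            have h11 : ((d0.toNat * m + 2 : ℕ) : ℤ) = d0 * (m:ℤ) + 2 := by
              push_cast [htn]; ring
            have h12 : (k:ℤ) ∣ ((d0.toNat * m + 2 : ℕ) : ℤ) := by rw [h11]; exact hdvdz
            exact_mod_cast h12
          have hdnz : d0.toNat ≠ 0 := by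
            intro h0
            rw [h0, Nat.zero_mul, Nat.zero_add] at hdvdn
            have := Nat.le_of_dvd (by omega) hdvdn; omega
          have hdlt : d0.toNat < k := by
            have h13 : (d0.toNat : ℤ) < (k:ℤ) := by rw [htn]; exact hd0lt
            exact_mod_cast h13
          exact ⟨d0.toNat, by omega, by omega, hdvdn⟩
        have hd2 : 2 ≤ d := by
          rcases Nat.eq_or_lt_of_le hd1 with h | h
          · exfalso
            obtain ⟨c, hc⟩ := hdvd
            rw [← h, Nat.one_mul] at hc
            rcases Nat.lt_or_ge c 2 with hc2 | hc2
            · have h14 : k * c ≤ k * 1 := Nat.mul_le_mul_left k (by omega)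
              omega
            · have h14 : k * 2 ≤ k * c := Nat.mul_le_mul_left k hc2
              omega
          · omega
        have hdm := Nat.div_add_mod (k*k - k - 1 - s) m
        have hrm : (k*k - k - 1 - s) % m < m := Nat.mod_lt _ hm0
        set Q := (k*k - k - 1 - s)/m with hQdef
        have hcm : m * Q = Q * m := Nat.mul_comm _ _
        have hQ1 : 1 ≤ Q := by
          rw [hQdef]
          exact Nat.div_pos (by omega) hm0
        set i := min (Q-1) (k-1-d) with hidef
        have hij : i + d ≤ k-1 := by omega
        have hup : s + (i+1)*m ≤ k*k - k - 1 := by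
          rcases le_or_gt (Q-1) (k-1-d) with hq | hq
          · have hieq : (i+1)*m = Q*m := by
              rw [show i + 1 = Q from by omega]
            omega
          · have h12 : (i+1)*m ≤ Q*m := Nat.mul_le_mul_right m (by omega)
            omega
        have hlow : k*k - k ≤ s + i*m + d*m := by
          have h15 : (i+d)*m = i*m + d*m := Nat.add_mul i d m
          rcases le_or_gt (Q-1) (k-1-d) with hq | hq
          · have h13 : (Q+1)*m ≤ (i+d)*m := Nat.mul_le_mul_right m (by omega)
            have h14 : (Q+1)*m = Q*m + m := by rw [Nat.add_mul, Nat.one_mul]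
            omega
          · have h17 : i*m + d*m = (k-1)*m := by
              rw [← h15, show i + d = k-1 from by omega]
            omega
        have hadd1 : (i+1)*m = i*m + m := by rw [Nat.add_mul, Nat.one_mul]
        have hpt : ∀ t, t < m → oneFn k (s + (i*m + t)) = oneFn k (s + ((i+d)*m + t)) := by
          intro t ht
          have hiff := run_mid k (s + (i*m + t)) (d*m) hk hdvd (by omega) (by omega)
          have hcg := oneFn_congr hiff
          have h15 : (i+d)*m = i*m + d*m := Nat.add_mul i d m
          rwa [show s + (i*m + t) + d*m = s + ((i+d)*m + t) from by omega] at hcg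
        exact hdist i (by omega) (i+d) (by omega) (by omega)
          (hEq i (i+d) (by omega) (by omega) hpt)
      · -- gcd ≥ 3 : type A
        obtain ⟨d, hdk⟩ := Nat.gcd_dvd_right m k
        obtain ⟨m', hm'⟩ := Nat.gcd_dvd_left m k
        have hd0 : 1 ≤ d := by
          rcases Nat.eq_zero_or_pos d with h | h
          · rw [h, Nat.mul_zero] at hdk; omega
          · omega
        have hd3 : 3*d ≤ k := by
          calc 3*d ≤ Nat.gcd m k * d := Nat.mul_le_mul_right d hg
          _ = k := hdk.symm
        have hkdd : k ∣ d*m := by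
          refine ⟨m', ?_⟩
          have e1 : d * (Nat.gcd m k * m') = d * m := by rw [← hm']
          have e2 : (Nat.gcd m k * d) * m' = k * m' := by rw [← hdk]
          calc d*m = d * (Nat.gcd m k * m') := e1.symm
          _ = (Nat.gcd m k * d) * m' := by ring
          _ = k * m' := e2
        have hdub : 2*d + 2 ≤ k := by omega
        have h15 : (d+1)*m = d*m + m := by rw [Nat.add_mul, Nat.one_mul]
        by_cases hc : s + (d+1)*m + 1 ≤ k*k - k
        · -- left run, blocks 0 and d
          have hpt : ∀ t, t < m → oneFn k (s + (0*m + t)) = oneFn k (s + (d*m + t)) := by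
            intro t ht
            have hiff := run_left k (s + (0*m + t)) (d*m) hk hkdd (by omega)
            have hcg := oneFn_congr hiff
            rwa [show s + (0*m + t) + d*m = s + (d*m + t) from by omega] at hcg
          have hpt' : ∀ t, t < m → oneFn k (s + (0*m + t)) = oneFn k (s + (d*m + t)) := hpt
          exact hdist 0 (by omega) d (by omega) (by omega)
            (hEq 0 d (by omega) (by omega) (by
              intro t ht
              have := hpt t ht
              simpa using this))
        · -- right run
          push_neg at hc
          have hdm0 := Nat.div_add_mod (k*k - k - s + m - 1) m
          have hrm0 : (k*k - k - s + m - 1) % m < m := Nat.mod_lt _ hm0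
          set i0 := (k*k - k - s + m - 1)/m with hi0def
          have hcm0 : m * i0 = i0 * m := Nat.mul_comm _ _
          have hge : k*k - k ≤ s + i0*m := by omega
          have hi0le : i0 ≤ d + 1 := by
            by_contra hcon
            have h17 : (d+2)*m ≤ i0*m := Nat.mul_le_mul_right m (by omega)
            have h18 : (d+2)*m = d*m + m + m := by
              rw [Nat.add_mul]; omega
            omega
          have hpt : ∀ t, t < m → oneFn k (s + (i0*m + t)) = oneFn k (s + ((i0+d)*m + t)) := by
            intro t ht
            have hiff := run_right k (s + (i0*m + t)) (d*m) hk hkdd (by omega)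
            have hcg := oneFn_congr hiff
            have h16 : (i0+d)*m = i0*m + d*m := Nat.add_mul i0 d m
            rwa [show s + (i0*m + t) + d*m = s + ((i0+d)*m + t) from by omega] at hcg
          exact hdist i0 (by omega) (i0+d) (by omega) (by omega)
            (hEq i0 (i0+d) (by omega) (by omega) hpt)



theorem periodic_mod {α : Type*} (y : List α) (p : ℕ) (hp : 0 < p)
    (hper : ∀ t, t + p < y.length → y[t]? = y[t+p]?) :
    ∀ t, t < y.length → y[t]? = y[t % p]? := by
  intro t
  induction t using Nat.strong_induction_on with
  | _ t ih =>
    intro ht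
    rcases Nat.lt_or_ge t p with h | h
    · rw [Nat.mod_eq_of_lt h]
    · have e1 : y[t - p]? = y[t]? := by
        have e2 := hper (t - p) (by omega)
        rwa [show t - p + p = t from by omega] at e2
      rw [← e1, ih (t-p) (by omega) (by omega), Nat.mod_eq_sub_mod h]

theorem periodic_eq_flatten {α : Type*} (y : List α) (p n : ℕ) (hp : 0 < p) (hn : 0 < n)
    (hlen : y.length = n * p)
    (hper : ∀ t, t + p < y.length → y[t]? = y[t+p]?) :
    y = (List.replicate n (y.take p)).flatten := by
  have hple : p ≤ y.length := by
    have : 1 * p ≤ n * p := Nat.mul_le_mul_right p hn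
    omega
  have hpl : (y.take p).length = p := by rw [List.length_take]; omega
  apply List.ext_getElem?
  intro t
  rcases Nat.lt_or_ge t y.length with ht | ht
  · rw [getElem?_flatten_replicate n _ t (by rw [hpl]; omega), hpl,
      List.getElem?_take_of_lt (Nat.mod_lt _ hp)]
    exact periodic_mod y p hp hper t ht
  · rw [List.getElem?_eq_none ht,
      List.getElem?_eq_none (by rw [length_flatten_replicate, hpl]; omega)]

theorem droptake_infix {α : Type*} (w : List α) (a n : ℕ) :
    (w.drop a).take n <:+: w :=
  ((w.drop a).take_prefix n).isInfix.trans (w.drop_suffix a).isInfix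

theorem infix_map_rev {α β : Type*} (f : α → β) {t : List β} {l : List α}
    (h : t <:+: l.map f) : ∃ s, s <:+: l ∧ t = s.map f := by
  obtain ⟨pre, suf, hx⟩ := h
  rw [eq_comm, show pre ++ t ++ suf = pre ++ (t ++ suf) from by simp, List.map_eq_append_iff] at hx
  obtain ⟨l1, l2, hl, hpre, hrest⟩ := hx
  obtain ⟨l3, l4, hl2, ht, hsuf⟩ := List.map_eq_append_iff.mp hrest
  exact ⟨l3, ⟨l1, l4, by rw [hl, hl2]; simp⟩, ht.symm⟩


theorem mem_S (β k : ℕ) (hk : 4 ≤ k) (w : List (Fin β))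
    (hw : w.length = k^5 + k^3) :
    HasKPowerFactor k w ∨ HasKAntipowerFactor k w := by
  classical
  by_cases ha : HasKAntipowerFactor k w
  · exact Or.inr ha
  left
  have hk4 : 0 < k^4 := by positivity
  have hk2 : 0 < k^2 := by positivity
  have hpair : ∀ m : ℕ, ∃ i j : ℕ, (k^4 ≤ m → m ≤ k^4 + k^2 →
      i < j ∧ j < k ∧ ∀ t < m, w[i*m + t]? = w[j*m + t]?) := by
    intro m
    by_cases hmr : k^4 ≤ m ∧ m ≤ k^4 + k^2
    swap
    · exact ⟨0, 0, fun h1 h2 => absurd ⟨h1, h2⟩ hmr⟩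
    obtain ⟨hm1, hm2⟩ := hmr
    have hm0 : 0 < m := by omega
    have hkm : k*m ≤ w.length := by
      rw [hw]
      calc k*m ≤ k*(k^4 + k^2) := Nat.mul_le_mul_left k hm2
      _ = k^5 + k^3 := by ring
    have hvlen : (w.take (k*m)).length = k*m := by rw [List.length_take]; omega
    have hnot : ¬ IsKAntipower k (w.take (k*m)) :=
      fun hanti => ha ⟨w.take (k*m), (List.take_prefix _ _).isInfix, hanti⟩
    rw [IsKAntipower] at hnot
    push_neg at hnot
    obtain ⟨i0, hi0, j0, hj0, hne0, heq0⟩ := hnot m (by omega) hvlen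
    have hblk : ∀ i t, i < k → t < m →
        (listBlock (w.take (k*m)) m i)[t]? = w[i*m + t]? := by
      intro i t hi ht
      have h5 : (i+1)*m ≤ k*m := Nat.mul_le_mul_right m (by omega)
      rw [Nat.add_mul, Nat.one_mul] at h5
      rw [listBlock, List.getElem?_take_of_lt ht, List.getElem?_drop,
        List.getElem?_take_of_lt (by omega)]
    rcases Nat.lt_or_ge i0 j0 with hij | hij
    · exact ⟨i0, j0, fun _ _ => ⟨hij, hj0, fun t ht => by
        rw [← hblk i0 t hi0 ht, ← hblk j0 t hj0 ht, heq0]⟩⟩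
    · exact ⟨j0, i0, fun _ _ => ⟨by omega, hi0, fun t ht => by
        rw [← hblk i0 t hi0 ht, ← hblk j0 t hj0 ht, heq0]⟩⟩
  choose I J hIJ using hpair
  have key : ∀ m1 m2 : ℕ, k^4 ≤ m1 → m1 ≤ k^4 + k^2 → k^4 ≤ m2 → m2 ≤ k^4 + k^2 →
      I m1 = I m2 → J m1 = J m2 → m1 < m2 → HasKPowerFactor k w := by
    intro m1 m2 hb1a hb1b hb2a hb2b hIe hJe hlt
    obtain ⟨hij, hjk, hE1⟩ := hIJ m1 hb1a hb1b
    obtain ⟨hij2, hjk2, hE2⟩ := hIJ m2 hb2a hb2b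
    rw [← hIe, ← hJe] at hE2
    set i := I m1 with hidef
    set j := J m1 with hjdef
    set d := j - i with hddef
    set δ := m2 - m1 with hδdef
    have hd1 : 1 ≤ d := by omega
    have hδ1 : 1 ≤ δ := by omega
    have hδub : δ ≤ k^2 := by omega
    have him : i*m1 ≤ i*m2 := Nat.mul_le_mul_left i (by omega)
    have hjm1 : j*m1 = i*m1 + d*m1 := by rw [show j = i + d from by omega, Nat.add_mul]
    have hjm2 : j*m2 = i*m2 + d*m2 := by rw [show j = i + d from by omega, Nat.add_mul]
    have hdm : d*m2 = d*m1 + d*δ := by rw [show m2 = m1 + δ from by omega, Nat.mul_add]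
    have him2 : i*m2 = i*m1 + i*δ := by rw [show m2 = m1 + δ from by omega, Nat.mul_add]
    have f1 : i*δ ≤ k*k^2 := Nat.mul_le_mul (by omega) hδub
    have f2 : d*δ ≤ (k-1)*k^2 := Nat.mul_le_mul (by omega) hδub
    have f3 : k*(d*δ) ≤ k*((k-1)*k^2) := Nat.mul_le_mul_left k f2
    have f4 : k*((k-1)*k^2) + k*k^2 = k^4 := by
      obtain ⟨j', rfl⟩ : ∃ j', k = j' + 4 := ⟨k - 4, by omega⟩
      rw [show j'+4-1 = j'+3 from by omega]; ring
    have hper0 : ∀ p, i*m2 ≤ p → p < i*m1 + m1 → w[p + d*m1]? = w[p + d*m2]? := by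
      intro p hp1 hp2
      have e1 := hE1 (p - i*m1) (by omega)
      have e2 := hE2 (p - i*m2) (by omega)
      rw [show i*m1 + (p - i*m1) = p from by omega,
        show j*m1 + (p - i*m1) = p + d*m1 from by omega] at e1
      rw [show i*m2 + (p - i*m2) = p from by omega,
        show j*m2 + (p - i*m2) = p + d*m2 from by omega] at e2
      rw [← e1, ← e2]
    set aa := i*m2 + d*m1 with haadef
    have hdm12 : d*m1 ≤ d*m2 := Nat.mul_le_mul_left d (by omega)
    have hjub : j*m2 ≤ (k-1)*m2 := Nat.mul_le_mul_right m2 (by omega)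
    have hkm2 : (k-1)*m2 + m2 = k*m2 := by
      have h10 : (k-1+1)*m2 = (k-1)*m2 + m2 := by rw [Nat.add_mul, Nat.one_mul]
      rw [show k-1+1 = k from by omega] at h10; omega
    have hwk : k*m2 ≤ k^5 + k^3 := by
      calc k*m2 ≤ k*(k^4 + k^2) := Nat.mul_le_mul_left k hb2b
      _ = k^5 + k^3 := by ring
    have hB1 : aa + k*(d*δ) ≤ w.length := by rw [hw]; omega
    set y := (w.drop aa).take (k*(d*δ)) with hydef
    have hylen : y.length = k*(d*δ) := by
      rw [hydef, List.length_take, List.length_drop]; omega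
    have hyget : ∀ t', t' < k*(d*δ) → y[t']? = w[aa + t']? := by
      intro t' ht'
      rw [hydef, List.getElem?_take_of_lt ht', List.getElem?_drop]
    have hyper : ∀ t, t + d*δ < y.length → y[t]? = y[t + d*δ]? := by
      intro t ht
      rw [hylen] at ht
      rw [hyget t (by omega), hyget (t + d*δ) (by omega)]
      have e := hper0 (i*m2 + t) (by omega) (by omega)
      rw [show aa + t = i*m2 + t + d*m1 from by omega,
        show aa + (t + d*δ) = i*m2 + t + d*m2 from by omega]
      exact e
    have hp0 : 0 < d*δ := Nat.mul_pos (by omega) (by omega)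
    have hflat := periodic_eq_flatten y (d*δ) k hp0 (by omega) hylen hyper
    refine ⟨y.take (d*δ), ?_, ?_⟩
    · have hlen2 : (y.take (d*δ)).length = d*δ := by
        rw [List.length_take, hylen]
        have h11 : 1*(d*δ) ≤ k*(d*δ) := Nat.mul_le_mul_right _ (by omega)
        omega
      intro hnil
      rw [hnil] at hlen2
      simp at hlen2
      omega
    · rw [← hflat]
      exact droptake_infix w aa (k*(d*δ))
  have hmaps : ∀ m ∈ Finset.Icc (k^4) (k^4 + k^2),
      (I m, J m) ∈ Finset.range k ×ˢ Finset.range k := by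
    intro m hm
    rw [Finset.mem_Icc] at hm
    have := hIJ m hm.1 hm.2
    rw [Finset.mem_product, Finset.mem_range, Finset.mem_range]
    omega
  have hcard : (Finset.range k ×ˢ Finset.range k).card < (Finset.Icc (k^4) (k^4 + k^2)).card := by
    rw [Finset.card_product, Finset.card_range, Nat.card_Icc]
    have h12 : k^2 = k*k := by ring
    omega
  obtain ⟨m1, hm1, m2, hm2, hnem, hfe⟩ :=
    Finset.exists_ne_map_eq_of_card_lt_of_maps_to hcard hmaps
  rw [Finset.mem_Icc] at hm1 hm2
  rw [Prod.mk.injEq] at hfe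
  rcases Nat.lt_or_ge m1 m2 with hlt | hge
  · exact key m1 m2 hm1.1 hm1.2 hm2.1 hm2.2 hfe.1 hfe.2 hlt
  · exact key m2 m1 hm2.1 hm2.2 hm1.1 hm1.2 hfe.1.symm hfe.2.symm (by omega)


end S16

/-- For `k ≥ 4`, the binary word
`x = 1 (0^(k-1) 1)^(k-2) 0^(k-2) 1 0^(k-2) (1 0^(k-1))^(k-2) 1` has length `2k² - 2k - 1`
and contains no `k`-power factor and no `k`-anti-power factor; consequently
`N_α(k,k) ≥ 2k² - 2k` for every alphabet size `α ≥ 2`. -/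
theorem statement16 (k : ℕ) (hk : 4 ≤ k) :
    (lowerBoundWord k).length = 2 * k ^ 2 - 2 * k - 1 ∧
    ¬ HasKPowerFactor k (lowerBoundWord k) ∧
    ¬ HasKAntipowerFactor k (lowerBoundWord k) ∧
    ∀ α : ℕ, 2 ≤ α → 2 * k ^ 2 - 2 * k ≤ Nalpha α k := by
  have hL := S16.lbw_length k hk
  have hpow := S16.no_kpower k hk
  have hanti := S16.no_kanti k hk
  have hsq : k^2 = k*k := by ring
  refine ⟨by rw [hsq]; exact hL, hpow, hanti, ?_⟩
  intro α hα
  rw [Nalpha]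
  apply le_csInf
  · exact ⟨k^5 + k^3, fun w hw => S16.mem_S α k hk w hw⟩
  · intro N hN
    by_contra hlt
    push_neg at hlt
    have hNL : N ≤ (lowerBoundWord k).length := by rw [hL]; omega
    set f : Fin 2 → Fin α := Fin.castLE hα with hfdef
    have hinj : Function.Injective f := Fin.castLE_injective hα
    set w : List (Fin α) := ((lowerBoundWord k).take N).map f with hwdef
    have hwlen : w.length = N := by
      rw [hwdef, List.length_map, List.length_take]; omega
    rcases hN w hwlen with hp | hv
    · obtain ⟨u, hune, huinf⟩ := hp
      rw [hwdef] at huinf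
      obtain ⟨s', hs'inf, hs'eq⟩ := S16.infix_map_rev f huinf
      have hs'x : s' <:+: lowerBoundWord k :=
        hs'inf.trans ((lowerBoundWord k).take_prefix N).isInfix
      have hulen : 0 < u.length := List.length_pos_iff.mpr hune
      have hslen : s'.length = k * u.length := by
        have h1 := congrArg List.length hs'eq
        rw [List.length_map, S16.length_flatten_replicate] at h1
        omega
      set u' := s'.take u.length with hu'def
      have hmapu : u'.map f = u := by
        rw [hu'def, List.map_take, ← hs'eq]
        have hrep : (List.replicate k u).flatten = u ++ (List.replicate (k-1) u).flatten := by
          conv_lhs => rw [show k = (k-1)+1 from by omega]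
          rw [List.replicate_succ, List.flatten_cons]
        rw [hrep, List.take_left]
      have hs'flat : s' = (List.replicate k u').flatten := by
        apply List.map_injective_iff.mpr hinj
        rw [List.map_flatten, List.map_replicate, hmapu, ← hs'eq]
      have hu'ne : u' ≠ [] := by
        intro h0
        rw [h0] at hmapu
        simp at hmapu
        exact hune hmapu
      exact hpow ⟨u', hu'ne, by rw [← hs'flat]; exact hs'x⟩
    · obtain ⟨v, hvinf, m, hm, hvlen, hdist⟩ := hv
      rw [hwdef] at hvinf
      obtain ⟨v', hv'inf, hv'eq⟩ := S16.infix_map_rev f hvinf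
      have hv'x : v' <:+: lowerBoundWord k :=
        hv'inf.trans ((lowerBoundWord k).take_prefix N).isInfix
      refine hanti ⟨v', hv'x, m, hm, ?_, ?_⟩
      · have h1 := congrArg List.length hv'eq
        rw [List.length_map] at h1
        omega
      · intro i hi j hj hne heq
        apply hdist i hi j hj hne
        have hbmap : ∀ i', listBlock (v'.map f) m i' = (listBlock v' m i').map f := by
          intro i'
          simp [listBlock, List.map_take, List.map_drop]
        rw [hv'eq, hbmap, hbmap, heq]
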